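/- In the Picard iteration estimate with logarithmic kernel g(t, s) = ln(t) − ln(s), the iterated integral satisfies ∫₀ᵗ g(t,t₁) ∫₀^{t₁} g(t₁,t₂) ⋯ ∫₀^{t_{k−1}} g(t_{k−1},t_k) dt_k ⋯ dt₁ ≤ tᵏ/k! for all t > 0 and k ≥ 1. -/

import Mathlib

open Real intervalIntegral

/-- Iterated integral with logarithmic kernel `g(t,s) = ln t − ln s`:
`I 0 t = 1`, `I (k+1) t = ∫₀ᵗ (ln t − ln s) · I k s ds`. -/
noncomputable def iterLogInt : ℕ → ℝ → ℝ
  | 0, _ => 1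
  | k + 1, t => ∫ s in (0 : ℝ)..t, (Real.log t - Real.log s) * iterLogInt k s

private lemma keyDeriv (k : ℕ) (t : ℝ) (x : ℝ) (hx : 0 < x) :
    HasDerivAt (fun s : ℝ => (Real.log t * s ^ (k + 1) - (s * Real.log s) * s ^ k) / (k + 1)
      + s ^ (k + 1) / ((k : ℝ) + 1) ^ 2) ((Real.log t - Real.log x) * x ^ k) x := by
  have h1 := (hasDerivAt_pow (k + 1) x).const_mul (Real.log t)
  have h2 := (Real.hasDerivAt_mul_log hx.ne').mul (hasDerivAt_pow k x)
  have h3 := ((h1.sub h2).div_const ((k : ℝ) + 1)).add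
    ((hasDerivAt_pow (k + 1) x).div_const (((k : ℝ) + 1) ^ 2))
  refine HasDerivAt.congr_deriv h3 (Eq.symm ?_)
  have hk1 : ((k : ℝ) + 1) ≠ 0 := by positivity
  cases k with
  | zero => simp; ring
  | succ n =>
    simp only [Nat.add_sub_cancel]
    push_cast
    field_simp
    ring

private lemma keyIntegral (k : ℕ) (t : ℝ) (ht : 0 < t) :
    ∫ s in (0 : ℝ)..t, (Real.log t - Real.log s) * s ^ k
      = t ^ (k + 1) / ((k : ℝ) + 1) ^ 2 := by
  set F : ℝ → ℝ := fun s => (Real.log t * s ^ (k + 1) - (s * Real.log s) * s ^ k) / (k + 1)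
      + s ^ (k + 1) / ((k : ℝ) + 1) ^ 2 with hF
  have hcont : ContinuousOn F (Set.Icc 0 t) := by
    apply Continuous.continuousOn
    fun_prop
  have hderiv : ∀ x ∈ Set.Ioo (0 : ℝ) t,
      HasDerivAt F ((Real.log t - Real.log x) * x ^ k) x := fun x hx => keyDeriv k t x hx.1
  have hnonneg : ∀ x ∈ Set.Ioo (0 : ℝ) t, 0 ≤ (Real.log t - Real.log x) * x ^ k := by
    intro x hx
    have := Real.log_le_log hx.1 hx.2.le
    have := pow_nonneg hx.1.le k
    nlinarith
  have hint : IntervalIntegrable (fun s : ℝ => (Real.log t - Real.log s) * s ^ k)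
      MeasureTheory.volume 0 t := by
    apply intervalIntegrable_deriv_of_nonneg (g := F)
    · rwa [Set.uIcc_of_le ht.le]
    · simpa [ht.le] using hderiv
    · simpa [ht.le] using hnonneg
  rw [integral_eq_sub_of_hasDerivAt_of_le ht.le hcont hderiv hint]
  have hk1 : ((k : ℝ) + 1) ≠ 0 := by positivity
  simp only [hF, Real.log_zero]
  field_simp
  ring

private lemma iterLogInt_eq (k : ℕ) : ∀ t : ℝ, 0 ≤ t →
    iterLogInt k t = t ^ k / ((Nat.factorial k : ℝ)) ^ 2 := by
  induction k with
  | zero => intro t _; simp [iterLogInt]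
  | succ k ih =>
    intro t ht
    rcases ht.eq_or_lt with h | h
    · rw [← h]
      simp [iterLogInt]
    have hcongr : ∀ s ∈ Set.uIcc (0 : ℝ) t,
        (Real.log t - Real.log s) * iterLogInt k s
          = (1 / ((Nat.factorial k : ℝ)) ^ 2) * ((Real.log t - Real.log s) * s ^ k) := by
      intro s hs
      rw [Set.uIcc_of_le h.le] at hs
      rw [ih s hs.1]
      ring
    rw [show iterLogInt (k + 1) t
        = ∫ s in (0 : ℝ)..t, (Real.log t - Real.log s) * iterLogInt k s from rfl,
      intervalIntegral.integral_congr hcongr, intervalIntegral.integral_const_mul,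
      keyIntegral k t h]
    have hfk : (0 : ℝ) < (Nat.factorial k : ℝ) := by positivity
    rw [Nat.factorial_succ]
    push_cast
    field_simp

theorem iterated_log_integral_bound (t : ℝ) (ht : 0 < t) (k : ℕ) (hk : 1 ≤ k) :
    iterLogInt k t ≤ t ^ k / (Nat.factorial k : ℝ) := by
  rw [iterLogInt_eq k t ht.le]
  have h1 : (0 : ℝ) < (Nat.factorial k : ℝ) := by positivity
  have h2 : (Nat.factorial k : ℝ) ≤ ((Nat.factorial k : ℝ)) ^ 2 := by
    have : (1 : ℝ) ≤ (Nat.factorial k : ℝ) := by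
      exact_mod_cast Nat.one_le_iff_ne_zero.mpr (Nat.factorial_ne_zero k)
    nlinarith
  exact div_le_div_of_nonneg_left (by positivity) h1 h2
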